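/- Let Ω be a nonempty finite type with a probability mass function p, let Y : Ω → {0,1} satisfy P(Y=0) = P(Y=1) = 1/2, and let U, V : Ω → ℝ be random variables that are (a) conditionally independent given Y, i.e. for each i ∈ {0,1} and all u, v ∈ ℝ, P(U=u, V=v | Y=i) = P(U=u | Y=i) · P(V=v | Y=i), and (b) calibrated, i.e. P(Y=0 | U=u) = u for every u with P(U=u) > 0 and P(Y=0 | V=v) = v for every v with P(V=v) > 0. Then for all u, v ∈ ℝ: P(U=u and V=v) = 2 · (u·v + (1-u)·(1-v)) · P(U=u) · P(V=v). -/

import Mathlib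

open Classical in
/-- if `Y : Ω → {0,1}` is balanced and `U, V : Ω → ℝ` are
conditionally independent given `Y` and calibrated (`P(Y=0|U=u) = u` whenever
`P(U=u) > 0`, and likewise for `V`), then
`P(U=u, V=v) = 2·(uv+(1-u)(1-v))·P(U=u)·P(V=v)` for all `u, v`. -/
theorem stmt_3 {Ω : Type*} [Fintype Ω] [Nonempty Ω]
    (p : Ω → ℝ) (hp : ∀ ω, 0 ≤ p ω) (hsum : ∑ ω : Ω, p ω = 1)
    (Y : Ω → Fin 2) (U V : Ω → ℝ)
    -- balanced labels
    (hY0 : ∑ ω : Ω, (if Y ω = 0 then p ω else 0) = 1 / 2)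
    (hY1 : ∑ ω : Ω, (if Y ω = 1 then p ω else 0) = 1 / 2)
    -- (a) conditional independence of U and V given Y:
    -- P(U=u, V=v | Y=i) = P(U=u | Y=i) · P(V=v | Y=i)
    (hci : ∀ (i : Fin 2) (u v : ℝ),
      (∑ ω : Ω, if U ω = u ∧ V ω = v ∧ Y ω = i then p ω else 0) /
          (∑ ω : Ω, if Y ω = i then p ω else 0) =
        ((∑ ω : Ω, if U ω = u ∧ Y ω = i then p ω else 0) /
            (∑ ω : Ω, if Y ω = i then p ω else 0)) *
          ((∑ ω : Ω, if V ω = v ∧ Y ω = i then p ω else 0) /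
            (∑ ω : Ω, if Y ω = i then p ω else 0)))
    -- (b) calibration: P(Y=0 | U=u) = u and P(Y=0 | V=v) = v
    (hcalU : ∀ u : ℝ, 0 < (∑ ω : Ω, if U ω = u then p ω else 0) →
      (∑ ω : Ω, if Y ω = 0 ∧ U ω = u then p ω else 0) /
          (∑ ω : Ω, if U ω = u then p ω else 0) = u)
    (hcalV : ∀ v : ℝ, 0 < (∑ ω : Ω, if V ω = v then p ω else 0) →
      (∑ ω : Ω, if Y ω = 0 ∧ V ω = v then p ω else 0) /
          (∑ ω : Ω, if V ω = v then p ω else 0) = v) :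
    ∀ u v : ℝ,
      (∑ ω : Ω, if U ω = u ∧ V ω = v then p ω else 0) =
        2 * (u * v + (1 - u) * (1 - v)) *
          (∑ ω : Ω, if U ω = u then p ω else 0) *
          (∑ ω : Ω, if V ω = v then p ω else 0) := by
  intro u v
  -- nonnegativity of indicator sums
  have hnn : ∀ (P : Ω → Prop) [DecidablePred P],
      0 ≤ ∑ ω : Ω, if P ω then p ω else 0 := by
    intro P _
    exact Finset.sum_nonneg fun ω _ => by by_cases h : P ω <;> simp [h, hp ω]
  have hzero : ∀ (P Q : Ω → Prop) [DecidablePred P] [DecidablePred Q],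
      (∑ ω : Ω, if P ω then p ω else 0) = 0 → (∀ ω, Q ω → P ω) →
      (∑ ω : Ω, if Q ω then p ω else 0) = 0 := by
    intro P Q _ _ h himp
    have h' := (Finset.sum_eq_zero_iff_of_nonneg
      (fun ω _ => by by_cases hω : P ω <;> simp [hω, hp ω])).mp h
    apply Finset.sum_eq_zero
    intro ω _
    by_cases hq : Q ω
    · have := h' ω (Finset.mem_univ ω); simp [himp ω hq] at this; simp [hq, this]
    · simp [hq]
  rcases eq_or_lt_of_le (hnn (fun ω => U ω = u)) with hU | hU
  · rw [hzero (fun ω => U ω = u) (fun ω => U ω = u ∧ V ω = v) hU.symm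
      (fun ω h => h.1), ← hU]
    ring
  rcases eq_or_lt_of_le (hnn (fun ω => V ω = v)) with hV | hV
  · rw [hzero (fun ω => V ω = v) (fun ω => U ω = u ∧ V ω = v) hV.symm
      (fun ω h => h.2), ← hV]
    ring
  -- splitting by Y
  have hy : ∀ ω : Ω, Y ω = 0 ∨ Y ω = 1 := by
    intro ω; omega
  have hsplit : ∀ (P : Ω → Prop) [DecidablePred P],
      (∑ ω : Ω, if P ω then p ω else 0) =
        (∑ ω : Ω, if P ω ∧ Y ω = 0 then p ω else 0) +
        (∑ ω : Ω, if P ω ∧ Y ω = 1 then p ω else 0) := by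
    intro P _
    rw [← Finset.sum_add_distrib]
    apply Finset.sum_congr rfl
    intro ω _
    rcases hy ω with h | h <;> by_cases hq : P ω <;>
      simp [h, hq, Fin.zero_eq_one_iff, Fin.one_eq_zero_iff]
  -- calibration consequences
  have hU0 : (∑ ω : Ω, if U ω = u ∧ Y ω = 0 then p ω else 0) =
      u * (∑ ω : Ω, if U ω = u then p ω else 0) := by
    have h := hcalU u hU
    rw [div_eq_iff (ne_of_gt hU)] at h
    rw [← h]
    exact Finset.sum_congr rfl fun ω _ => if_congr and_comm rfl rfl
  have hU1 : (∑ ω : Ω, if U ω = u ∧ Y ω = 1 then p ω else 0) =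
      (1 - u) * (∑ ω : Ω, if U ω = u then p ω else 0) := by
    have h := hsplit (fun ω => U ω = u)
    rw [hU0] at h
    linarith
  have hV0 : (∑ ω : Ω, if V ω = v ∧ Y ω = 0 then p ω else 0) =
      v * (∑ ω : Ω, if V ω = v then p ω else 0) := by
    have h := hcalV v hV
    rw [div_eq_iff (ne_of_gt hV)] at h
    rw [← h]
    exact Finset.sum_congr rfl fun ω _ => if_congr and_comm rfl rfl
  have hV1 : (∑ ω : Ω, if V ω = v ∧ Y ω = 1 then p ω else 0) =
      (1 - v) * (∑ ω : Ω, if V ω = v then p ω else 0) := by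
    have h := hsplit (fun ω => V ω = v)
    rw [hV0] at h
    linarith
  -- conditional independence consequences
  have hjoint : ∀ i : Fin 2,
      (∑ ω : Ω, if U ω = u ∧ V ω = v ∧ Y ω = i then p ω else 0) =
        2 * (∑ ω : Ω, if U ω = u ∧ Y ω = i then p ω else 0) *
          (∑ ω : Ω, if V ω = v ∧ Y ω = i then p ω else 0) := by
    intro i
    have h := hci i u v
    have hden : (∑ ω : Ω, if Y ω = i then p ω else 0) = 1 / 2 := by
      fin_cases i
      · exact hY0
      · exact hY1
    rw [hden] at h
    field_simp at h
    linarith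
  have hfinal := hsplit (fun ω => U ω = u ∧ V ω = v)
  simp only [and_assoc] at hfinal
  rw [hfinal, hjoint 0, hjoint 1, hU0, hU1, hV0, hV1]
  ring
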